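/- Let Ω = (0,1)ⁿ, Q̄ = [0,1]^{n−1} × [0,2], 1 < p < ∞, and for ε ∈ (0,1) let f_ε ∈ C²(Q̄;ℝⁿ) satisfy |∂_1 f_ε| = 1, ∂_1 f_ε ∈ span{e_1, e_n} and ∂_i f_ε = e_i for i = 2, …, n−1. Define the Lipschitz function u_ε : Ω → ℝⁿ by u_ε(x) = f_ε(⟦x⟧_ε) + (x_n − [x_n]_ε) ∂_1 f_ε^⊥(⟦x⟧_ε) for x ∈ εY_stiff ∩ Ω and by linear interpolation in the e_n-direction on εY_soft ∩ Ω. Then for every ε ∈ (0,1), ∫_{εY_stiff ∩ Ω} dist^p(∇u_ε, SO(n)) dx ≤ 2^p ε^p ‖∂²_{11} f_ε‖^p_{L^∞(Q̄;ℝⁿ)}. -/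

import Mathlib

open MeasureTheory Filter Topology Set
open scoped ENNReal

noncomputable section

namespace LayeredRigidity

abbrev Vec (n : ℕ) := EuclideanSpace ℝ (Fin n)
abbrev Mat (n : ℕ) := Matrix (Fin n) (Fin n) ℝ

/-- Interpret a plain function `Fin n → ℝ` as an element of Euclidean space. -/
def toVec {n : ℕ} (f : Fin n → ℝ) : Vec n := WithLp.toLp 2 f

/-- The last coordinate `x_n` of a vector. -/
def coordLast {n : ℕ} (x : Vec n) : ℝ :=
  if h : 0 < n then x ⟨n - 1, Nat.sub_lt h Nat.one_pos⟩ else 0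

/-- The first coordinate `x_1` of a vector. -/
def coord0 {n : ℕ} (x : Vec n) : ℝ := if h : 0 < n then x ⟨0, h⟩ else 0

/-- Standard basis vector `e_j`. -/
def bas {n : ℕ} (j : Fin n) : Vec n := EuclideanSpace.single j 1

/-- The last standard basis vector `e_n`, as a plain function. -/
def eL {n : ℕ} : Fin n → ℝ := fun j => if (j : ℕ) + 1 = n then 1 else 0

/-- The last standard basis vector `e_n`. -/
def eLast {n : ℕ} : Vec n := toVec eL

/-- The first standard basis vector `e_1`. -/
def eFirst {n : ℕ} : Vec n := toVec (fun j => if (j : ℕ) = 0 then 1 else 0)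

/-- Replace the last coordinate of `x` by `t`. -/
def setLast {n : ℕ} (x : Vec n) (t : ℝ) : Vec n :=
  toVec (fun j => if (j : ℕ) + 1 = n then t else x j)

/-- Frobenius norm of a matrix. -/
def frob {n : ℕ} (F : Mat n) : ℝ := Real.sqrt (∑ i, ∑ j, (F i j) ^ 2)

/-- The special orthogonal group `SO(n)`, as a set of matrices. -/
def SO (n : ℕ) : Set (Mat n) := {F | F * F.transpose = 1 ∧ F.det = 1}

/-- Frobenius distance of a matrix to `SO(n)`. -/
def distSO {n : ℕ} (F : Mat n) : ℝ := sInf ((fun Q => frob (F - Q)) '' SO n)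

/-- Matrix-vector multiplication, landing in Euclidean space. -/
def matVec {n : ℕ} (A : Mat n) (x : Vec n) : Vec n := toVec (fun i => ∑ j, A i j * x j)

/-- Outer product `v ⊗ w = v wᵀ`. -/
def outerM {n : ℕ} (v w : Fin n → ℝ) : Mat n := Matrix.of fun i j => v i * w j

/-- The `e_n`-directional component of a direction-indexed family (i.e. `v (n-1)`). -/
def lastOf {α : Type*} [AddCommMonoid α] {n : ℕ} (v : Fin n → α) : α :=
  ∑ j : Fin n, if (j : ℕ) + 1 = n then v j else 0

/-- The (periodically extended, `ε`-dilated) stiff layers `ε Y_stiff ⊆ ℝⁿ`. -/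
def stiffLayers {n : ℕ} (lam ε : ℝ) : Set (Vec n) :=
  {x | (⌈coordLast x / ε⌉ : ℝ) - coordLast x / ε ≤ 1 - lam}

/-- The (periodically extended, `ε`-dilated) soft layers `ε Y_soft ⊆ ℝⁿ`. -/
def softLayers {n : ℕ} (lam ε : ℝ) : Set (Vec n) :=
  {x | 1 - lam < (⌈coordLast x / ε⌉ : ℝ) - coordLast x / ε}

/-- One-dimensional stiff layers `ε I_stiff ⊆ ℝ`. -/
def stiff1D (lam ε : ℝ) : Set ℝ := {t | (⌈t / ε⌉ : ℝ) - t / ε ≤ 1 - lam}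

/-- One-dimensional soft layers `ε I_soft ⊆ ℝ`. -/
def soft1D (lam ε : ℝ) : Set ℝ := {t | 1 - lam < (⌈t / ε⌉ : ℝ) - t / ε}

/-- A set is cross-section connected if all its horizontal cross-sections are connected. -/
def CrossSectionConnected {n : ℕ} (Ω : Set (Vec n)) : Prop :=
  ∀ t : ℝ, IsPreconnected {x ∈ Ω | coordLast x = t}

/-- A set is flat if every nonempty horizontal cross-section of its closure has nonempty
relative interior in the corresponding hyperplane. -/
def Flat {n : ℕ} (Ω : Set (Vec n)) : Prop :=
  ∀ t : ℝ, (closure Ω ∩ {x | coordLast x = t}).Nonempty →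
    ∃ x ∈ closure Ω ∩ {x | coordLast x = t}, ∃ r > (0 : ℝ),
      Metric.ball x r ∩ {y | coordLast y = t} ⊆ closure Ω

/-- A Lipschitz domain: an open nonempty set whose boundary is locally, after an isometry of the
ambient space, the graph of a Lipschitz function with the set lying on one side. -/
def IsLipschitzDomain {n : ℕ} (Ω : Set (Vec n)) : Prop :=
  IsOpen Ω ∧ Ω.Nonempty ∧
  ∀ x ∈ frontier Ω, ∃ e : Vec n ≃ᵢ Vec n, ∃ K : NNReal, ∃ f : Vec n → ℝ, ∃ r : ℝ,
    0 < r ∧ LipschitzWith K f ∧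
    ∀ y ∈ Metric.ball x r, (y ∈ Ω ↔ f (setLast (e y) 0) < coordLast (e y))

/-- Componentwise membership in `L^p(Ω)`. -/
def LpFn {n : ℕ} {ι : Type*} (Ω : Set (Vec n)) (p : ℝ) (u : Vec n → ι → ℝ) : Prop :=
  ∀ i, MemLp (fun x => u x i) (ENNReal.ofReal p) (volume.restrict Ω)

/-- `G` is the weak (distributional) derivative of `u` on `Ω`:
integration by parts against smooth compactly supported test functions. -/
def IsWeakDeriv {n : ℕ} {ι : Type*} (Ω : Set (Vec n)) (u : Vec n → ι → ℝ)
    (G : Vec n → ι → Fin n → ℝ) : Prop :=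
  ∀ φ : Vec n → ℝ, ContDiff ℝ (⊤ : ℕ∞) φ → HasCompactSupport φ → tsupport φ ⊆ Ω →
    ∀ i j, ∫ x in Ω, u x i * fderiv ℝ φ x (bas j) = - ∫ x in Ω, G x i j * φ x

/-- Membership in the Sobolev space `W^{1,p}(Ω)`, with explicit weak derivative `G`. -/
def SobolevFn {n : ℕ} {ι : Type*} (Ω : Set (Vec n)) (p : ℝ) (u : Vec n → ι → ℝ)
    (G : Vec n → ι → Fin n → ℝ) : Prop :=
  LpFn Ω p u ∧ LpFn Ω p (fun x (ij : ι × Fin n) => G x ij.1 ij.2) ∧ IsWeakDeriv Ω u G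

/-- `W^{1,p}(Ω;ℝⁿ)` for vector-valued maps, with gradient matrix `Du` (`(Du)_{ij} = ∂_j u_i`). -/
def SobolevVec {n : ℕ} (Ω : Set (Vec n)) (p : ℝ) (u : Vec n → Vec n)
    (Du : Vec n → Mat n) : Prop :=
  SobolevFn Ω p (fun x i => u x i) (fun x i j => Du x i j)

/-- `W^{1,p}(Ω;ℝ^{n×n})` for matrix-valued maps; `DR x j` is the partial derivative `∂_j R`. -/
def SobolevMat {n : ℕ} (Ω : Set (Vec n)) (p : ℝ) (R : Vec n → Mat n)
    (DR : Vec n → Fin n → Mat n) : Prop :=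
  SobolevFn Ω p (fun x (ij : Fin n × Fin n) => R x ij.1 ij.2) (fun x ij j => DR x j ij.1 ij.2)

/-- The conjugate exponent of `p`, as an extended real. -/
def conjE (p : ℝ) : ℝ≥0∞ := if p = 1 then ⊤ else ENNReal.ofReal (p / (p - 1))

/-- Weak convergence in `L^p(Ω)` of a family indexed by `ε > 0`, as `ε → 0`:
testing componentwise against all `L^{p'}` functions. -/
def WeakLpFam {n : ℕ} {ι : Type*} (Ω : Set (Vec n)) (p : ℝ) (f : ℝ → Vec n → ι → ℝ)
    (g : Vec n → ι → ℝ) : Prop :=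
  ∀ φ : Vec n → ℝ, MemLp φ (conjE p) (volume.restrict Ω) →
    ∀ i, Tendsto (fun ε => ∫ x in Ω, f ε x i * φ x) (𝓝[>] (0 : ℝ))
      (𝓝 (∫ x in Ω, g x i * φ x))

/-- Strong convergence in `L^p(Ω)` of a family indexed by `ε > 0`, as `ε → 0`. -/
def StrongLpFam {n : ℕ} {ι : Type*} (Ω : Set (Vec n)) (p : ℝ) (f : ℝ → Vec n → ι → ℝ)
    (g : Vec n → ι → ℝ) : Prop :=
  ∀ i, Tendsto (fun ε => ∫ x in Ω, |f ε x i - g x i| ^ p) (𝓝[>] (0 : ℝ)) (𝓝 0)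

/-- One-dimensional Sobolev space `W^{1,p}(J)` with explicit weak derivative. -/
def Sobolev1D {ι : Type*} (J : Set ℝ) (p : ℝ) (ν ν' : ℝ → ι → ℝ) : Prop :=
  (∀ i, MemLp (fun t => ν t i) (ENNReal.ofReal p) (volume.restrict J)) ∧
  (∀ i, MemLp (fun t => ν' t i) (ENNReal.ofReal p) (volume.restrict J)) ∧
  ∀ φ : ℝ → ℝ, ContDiff ℝ (⊤ : ℕ∞) φ → HasCompactSupport φ → tsupport φ ⊆ J →
    ∀ i, ∫ t in J, ν t i * deriv φ t = - ∫ t in J, ν' t i * φ t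

/-- The open unit cube `(0,1)ⁿ`. -/
def unitCube (n : ℕ) : Set (Vec n) := {x | ∀ i, x i ∈ Set.Ioo (0 : ℝ) 1}

/-- The gradient matrix of a (differentiable) map, `(∇φ)_{ij} = ∂_j φ_i`. -/
def gradMat {n : ℕ} (φ : Vec n → Vec n) (x : Vec n) : Mat n :=
  Matrix.of fun i j => fderiv ℝ φ x (bas j) i

/-- The quasiconvex envelope of `W`, via the infimum over smooth compactly supported
perturbations on the unit cube (which has measure one). -/
def qcEnv {n : ℕ} (W : Mat n → ℝ) (F : Mat n) : ℝ :=
  sInf {v : ℝ | ∃ φ : Vec n → Vec n, ContDiff ℝ (⊤ : ℕ∞) φ ∧ tsupport φ ⊆ unitCube n ∧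
    v = ∫ x in unitCube n, W (F + gradMat φ x)}

/-- The minor of `F` with rows `s` and columns `t`. -/
def minor {n : ℕ} (F : Mat n) (s t : Finset (Fin n)) (h : t.card = s.card) : ℝ :=
  Matrix.det (Matrix.of fun i j : Fin s.card =>
    F (s.orderIsoOfFin rfl i).1 (t.orderIsoOfFin h j).1)

/-- Index type enumerating all minors of an `n × n` matrix. -/
def MinorIdx (n : ℕ) := {q : Finset (Fin n) × Finset (Fin n) // q.2.card = q.1.card}

/-- The vector of all minors of a matrix. -/
def minors {n : ℕ} (F : Mat n) : MinorIdx n → ℝ := fun q => minor F q.1.1 q.1.2 q.2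

/-- A function of matrices is polyconvex if it is a convex function of the vector of minors. -/
def Polyconvex {n : ℕ} (W : Mat n → ℝ) : Prop :=
  ∃ g : (MinorIdx n → ℝ) → ℝ, ConvexOn ℝ Set.univ g ∧ ∀ F, W F = g (minors F)

/-- The set `𝒜` of matrices of the form `R + d ⊗ e_n` with `R ∈ SO(n)`. -/
def Astar (n : ℕ) : Set (Mat n) := {F | ∃ R ∈ SO n, ∃ d : Fin n → ℝ, F = R + outerM d eL}

end LayeredRigidity

namespace LayeredRigidity

/-- `[t]_ε = ε⌈t/ε⌉ - ε + ((1+λ)/2)ε`, the height of the midsection of the closest stiff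
layer lying above. -/
def projT (lam ε t : ℝ) : ℝ := ε * (⌈t / ε⌉ : ℝ) - ε + (1 + lam) / 2 * ε

/-- `⟦x⟧_ε = (x', [x_n]_ε)`, the projection onto the midsection of the stiff layer. -/
def projX {n : ℕ} (lam ε : ℝ) (x : Vec n) : Vec n := setLast x (projT lam ε (coordLast x))

/-- `a^⊥ = (−a_n, a_2, …, a_{n−1}, a_1)`. -/
def perp {n : ℕ} (a : Vec n) : Vec n :=
  toVec fun i =>
    if (i : ℕ) = 0 then -(coordLast a) else if (i : ℕ) + 1 = n then coord0 a else a i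

/-- The partial derivative `∂_1 f` in the direction `e_1`. -/
def d1 {n : ℕ} (f : Vec n → Vec n) (y : Vec n) : Vec n :=
  if h : 0 < n then fderiv ℝ f y (bas ⟨0, h⟩) else 0

/-- The value of the layered construction on the stiff layers:
`f(⟦x⟧_ε) + (x_n − [x_n]_ε) ∂_1 f^⊥(⟦x⟧_ε)`. -/
def stiffVal {n : ℕ} (lam ε : ℝ) (f : Vec n → Vec n) (x : Vec n) : Vec n :=
  f (projX lam ε x) + (coordLast x - projT lam ε (coordLast x)) • perp (d1 f (projX lam ε x))

open Classical in
/-- The layered deformation `u_ε`: given by the bending formula on the stiff layers and by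
linear interpolation in the `e_n`-direction on the soft layers. -/
def layered {n : ℕ} (lam ε : ℝ) (f : Vec n → Vec n) (x : Vec n) : Vec n :=
  if x ∈ stiffLayers lam ε then stiffVal lam ε f x
  else
    (1 - (coordLast x - ε * ((⌈coordLast x / ε⌉ : ℝ) - 1)) / (ε * lam)) •
        stiffVal lam ε f (setLast x (ε * ((⌈coordLast x / ε⌉ : ℝ) - 1))) +
      ((coordLast x - ε * ((⌈coordLast x / ε⌉ : ℝ) - 1)) / (ε * lam)) •
        stiffVal lam ε f (setLast x (ε * ((⌈coordLast x / ε⌉ : ℝ) - 1) + ε * lam))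

/-- The closed box `Q̄ = [0,1]^{n-1} × [0,2]`. -/
def Qbar (n : ℕ) : Set (Vec n) :=
  {x | (∀ i : Fin n, (i : ℕ) + 1 ≠ n → x i ∈ Set.Icc (0 : ℝ) 1) ∧
    coordLast x ∈ Set.Icc (0 : ℝ) 2}

/-- `‖∂²₁₁ f‖_{L^∞(Q̄)}`. -/
def supD11 {n : ℕ} (f : Vec n → Vec n) : ℝ := ⨆ x ∈ Qbar n, ‖d1 (d1 f) x‖

/-- `‖∇² f‖_{L^∞(Q̄)}`. -/
def supD2 {n : ℕ} (f : Vec n → Vec n) : ℝ := ⨆ x ∈ Qbar n, ‖iteratedFDeriv ℝ 2 f x‖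

end LayeredRigidity

namespace LayeredRigidity

section AuxProof

variable {n : ℕ}

/-! ### Fin and coordinate utilities -/

def fz (hn : 2 ≤ n) : Fin n := ⟨0, by omega⟩
def fl (hn : 2 ≤ n) : Fin n := ⟨n - 1, by omega⟩

lemma fz_ne_fl (hn : 2 ≤ n) : fz hn ≠ fl hn := by
  simp only [fz, fl, Fin.mk.injEq, Ne]; omega

lemma last_iff (hn : 2 ≤ n) (j : Fin n) : (j : ℕ) + 1 = n ↔ j = fl hn := by
  have := j.2; simp only [fl, Fin.ext_iff]; omega

lemma zero_iff (hn : 2 ≤ n) (j : Fin n) : (j : ℕ) = 0 ↔ j = fz hn := by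
  simp only [fz, Fin.ext_iff]

lemma coordLast_eq (hn : 2 ≤ n) (x : Vec n) : coordLast x = x (fl hn) := by
  rw [coordLast, dif_pos (by omega : 0 < n)]; rfl

lemma coord0_eq (hn : 2 ≤ n) (x : Vec n) : coord0 x = x (fz hn) := by
  rw [coord0, dif_pos (by omega : 0 < n)]; rfl

lemma bas_apply (j i : Fin n) : bas j i = if i = j then 1 else 0 :=
  EuclideanSpace.single_apply j 1 i

lemma setLast_apply (hn : 2 ≤ n) (x : Vec n) (t : ℝ) (j : Fin n) :
    setLast x t j = if j = fl hn then t else x j := by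
  show (if (j : ℕ) + 1 = n then t else x j) = _
  by_cases h : j = fl hn
  · rw [if_pos ((last_iff hn j).2 h), if_pos h]
  · rw [if_neg (fun hh => h ((last_iff hn j).1 hh)), if_neg h]

lemma perp_apply (hn : 2 ≤ n) (a : Vec n) (i : Fin n) :
    perp a i = if i = fz hn then -(a (fl hn)) else if i = fl hn then a (fz hn) else a i := by
  show (if (i : ℕ) = 0 then -(coordLast a) else if (i : ℕ) + 1 = n then coord0 a else a i) = _
  rw [coordLast_eq hn, coord0_eq hn]
  by_cases h0 : i = fz hn
  · rw [if_pos ((zero_iff hn i).2 h0), if_pos h0]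
  · rw [if_neg (fun hh => h0 ((zero_iff hn i).1 hh)), if_neg h0]
    by_cases h1 : i = fl hn
    · rw [if_pos ((last_iff hn i).2 h1), if_pos h1]
    · rw [if_neg (fun hh => h1 ((last_iff hn i).1 hh)), if_neg h1]

lemma abs_coord_le_norm (x : Vec n) (i : Fin n) : |x i| ≤ ‖x‖ := by
  rw [EuclideanSpace.norm_eq, ← Real.sqrt_sq_eq_abs]
  apply Real.sqrt_le_sqrt
  have := Finset.single_le_sum (f := fun j => ‖x j‖ ^ 2)
    (fun j _ => sq_nonneg _) (Finset.mem_univ i)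
  simpa [Real.norm_eq_abs, sq_abs] using this

lemma norm_sq_eq_sum (x : Vec n) : ‖x‖ ^ 2 = ∑ i, (x i) ^ 2 := by
  rw [EuclideanSpace.norm_eq, Real.sq_sqrt (by positivity)]
  simp [Real.norm_eq_abs, sq_abs]

lemma sum_sq_perp (hn : 2 ≤ n) (u : Vec n) : ∑ i, (perp u i) ^ 2 = ∑ i, (u i) ^ 2 := by
  have h : ∀ i : Fin n, (perp u i) ^ 2 =
      (fun j => (u j) ^ 2) (Equiv.swap (fz hn) (fl hn) i) := by
    intro i
    rw [perp_apply hn]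
    by_cases h0 : i = fz hn
    · subst h0; rw [if_pos rfl, Equiv.swap_apply_left, neg_sq]
    · by_cases h1 : i = fl hn
      · subst h1; rw [if_neg h0, if_pos rfl, Equiv.swap_apply_right]
      · rw [if_neg h0, if_neg h1, Equiv.swap_apply_of_ne_of_ne h0 h1]
  rw [Finset.sum_congr rfl (fun i _ => h i)]
  exact Equiv.sum_comp (Equiv.swap (fz hn) (fl hn)) (fun j => (u j) ^ 2)

lemma norm_perp (hn : 2 ≤ n) (u : Vec n) : ‖perp u‖ = ‖u‖ := by
  rw [EuclideanSpace.norm_eq, EuclideanSpace.norm_eq]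
  congr 1
  simp only [Real.norm_eq_abs, sq_abs]
  exact sum_sq_perp hn u

/-! ### Rotation matrices -/

def Rot (hn : 2 ≤ n) (a b : ℝ) : Mat n := Matrix.of fun i j =>
  if j = fz hn then (if i = fz hn then a else if i = fl hn then b else 0)
  else if j = fl hn then (if i = fz hn then -b else if i = fl hn then a else 0)
  else if i = j then 1 else 0

section rot
variable (hn : 2 ≤ n) (a b : ℝ)

def rotEquiv : Fin 2 ⊕ Fin (n - 2) ≃ Fin n :=
  ((finSumFinEquiv.trans (finCongr (by omega))).trans
    (Equiv.swap (⟨1, by omega⟩ : Fin n) (fl hn)))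

lemma rotEquiv_inl0 : rotEquiv hn (Sum.inl 0) = fz hn := by
  have h1 : rotEquiv hn (Sum.inl 0)
      = Equiv.swap (⟨1, by omega⟩ : Fin n) (fl hn) ⟨0, by omega⟩ := rfl
  rw [h1, Equiv.swap_apply_of_ne_of_ne]
  · rfl
  · simp [Fin.ext_iff]
  · simp only [fl, Ne, Fin.mk.injEq]; omega

lemma rotEquiv_inl1 : rotEquiv hn (Sum.inl 1) = fl hn := by
  have h1 : rotEquiv hn (Sum.inl 1)
      = Equiv.swap (⟨1, by omega⟩ : Fin n) (fl hn) ⟨1, by omega⟩ := rfl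
  rw [h1, Equiv.swap_apply_left]

lemma rotEquiv_inr (k : Fin (n - 2)) :
    rotEquiv hn (Sum.inr k) ≠ fz hn ∧ rotEquiv hn (Sum.inr k) ≠ fl hn := by
  have hk := k.2
  have hn3 : 3 ≤ n := by omega
  have h1 : rotEquiv hn (Sum.inr k)
      = Equiv.swap (⟨1, by omega⟩ : Fin n) (fl hn) ⟨2 + (k : ℕ), by omega⟩ := rfl
  rw [h1]
  rcases eq_or_ne (⟨2 + (k : ℕ), by omega⟩ : Fin n) (fl hn) with h | h
  · rw [h, Equiv.swap_apply_right]
    constructor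
    · simp only [fz, Ne, Fin.mk.injEq]; omega
    · simp only [fl, Ne, Fin.mk.injEq]; omega
  · rw [Equiv.swap_apply_of_ne_of_ne _ h]
    · refine ⟨?_, h⟩
      simp only [fz, Ne, Fin.mk.injEq]; omega
    · simp only [Ne, Fin.mk.injEq]; omega

lemma rot_submatrix :
    (Rot hn a b).submatrix (rotEquiv hn) (rotEquiv hn) =
      Matrix.fromBlocks !![a, -b; b, a] 0 0 (1 : Matrix (Fin (n-2)) (Fin (n-2)) ℝ) := by
  ext i j
  rcases i with i | i <;> rcases j with j | j
  · fin_cases i <;> fin_cases j <;>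
      simp [Matrix.submatrix_apply, rotEquiv_inl0, rotEquiv_inl1, Rot, fz_ne_fl hn,
        (fz_ne_fl hn).symm]
  · obtain ⟨h1, h2⟩ := rotEquiv_inr hn j
    have hne : rotEquiv hn (Sum.inl i) ≠ rotEquiv hn (Sum.inr j) := by
      simp [(rotEquiv hn).injective.ne_iff]
    simp [Matrix.submatrix_apply, Rot, h1, h2, hne]
  · obtain ⟨h1, h2⟩ := rotEquiv_inr hn i
    have hne : rotEquiv hn (Sum.inr i) ≠ rotEquiv hn (Sum.inl j) := by
      simp [(rotEquiv hn).injective.ne_iff]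
    fin_cases j <;>
      simp [Matrix.submatrix_apply, Rot, h1, h2, rotEquiv_inl0, rotEquiv_inl1, hne]
  · obtain ⟨h1, h2⟩ := rotEquiv_inr hn j
    have : (rotEquiv hn (Sum.inr i) = rotEquiv hn (Sum.inr j)) ↔ i = j :=
      (rotEquiv hn).injective.eq_iff.trans (by simp)
    simp [Matrix.submatrix_apply, Rot, h1, h2, Matrix.one_apply, this]

lemma rot_mem_SO (hab : a ^ 2 + b ^ 2 = 1) : Rot hn a b ∈ SO n := by
  have htr : !![a, -b; b, a].transpose = !![a, b; -b, a] := by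
    ext i j; fin_cases i <;> fin_cases j <;> rfl
  have hA : !![a, -b; b, a] * !![a, -b; b, a].transpose = 1 := by
    rw [htr]
    ext i j
    fin_cases i <;> fin_cases j <;>
      simp [Matrix.mul_apply, Fin.sum_univ_two, Matrix.one_apply] <;> nlinarith [hab]
  have hdetA : Matrix.det !![a, -b; b, a] = 1 := by
    rw [Matrix.det_fin_two_of]; nlinarith [hab]
  have hsub := rot_submatrix hn a b
  constructor
  · have h1 : ((Rot hn a b) * (Rot hn a b).transpose).submatrix (rotEquiv hn) (rotEquiv hn)
        = 1 := by
      rw [← Matrix.submatrix_mul_equiv (Rot hn a b) (Rot hn a b).transpose _ (rotEquiv hn) _]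
      rw [show (Rot hn a b).transpose.submatrix (rotEquiv hn) (rotEquiv hn)
          = ((Rot hn a b).submatrix (rotEquiv hn) (rotEquiv hn)).transpose from
        (Matrix.transpose_submatrix _ _ _).symm]
      rw [hsub]
      simp only [Matrix.fromBlocks_transpose, Matrix.fromBlocks_multiply,
        Matrix.transpose_zero, Matrix.transpose_one, Matrix.mul_zero, Matrix.zero_mul,
        add_zero, zero_add, Matrix.mul_one, hA]
      exact Matrix.fromBlocks_one
    have := congrArg (fun M => M.submatrix (rotEquiv hn).symm (rotEquiv hn).symm) h1
    simpa [Matrix.submatrix_submatrix, Equiv.self_comp_symm, Matrix.submatrix_id_id] using this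
  · have : ((Rot hn a b).submatrix (rotEquiv hn) (rotEquiv hn)).det = (Rot hn a b).det :=
      Matrix.det_submatrix_equiv_self _ _
    rw [← this, hsub, Matrix.det_fromBlocks_zero₂₁]
    simp [hdetA]

end rot

/-! ### Measure lemmas -/

lemma volume_hyperplane (i : Fin n) (c : ℝ) : volume {x : Vec n | x i = c} = 0 := by
  have h := (EuclideanSpace.volume_preserving_symm_measurableEquiv_toLp (Fin n)).measure_preimage_equiv
    {y : Fin n → ℝ | y i = c}
  have hpre : (MeasurableEquiv.toLp 2 (Fin n → ℝ)).symm ⁻¹' {y : Fin n → ℝ | y i = c}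
      = {x : Vec n | x i = c} := rfl
  rw [hpre] at h
  rw [h, MeasureTheory.volume_pi]
  have h2 : MeasureTheory.Measure.pi (fun _ : Fin n => (volume : Measure ℝ))
      (Function.eval i ⁻¹' ({c} : Set ℝ)) = 0 :=
    MeasureTheory.Measure.pi_eval_preimage_null (fun _ : Fin n => volume) (by simp)
  have hset : (Function.eval i ⁻¹' ({c} : Set ℝ)) = {y : Fin n → ℝ | y i = c} := by
    ext y; simp [Function.eval]
  rwa [hset] at h2

lemma volume_unitCube : volume (unitCube n) = 1 := by
  have h := (EuclideanSpace.volume_preserving_symm_measurableEquiv_toLp (Fin n)).measure_preimage_equiv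
    (Set.pi Set.univ fun _ : Fin n => Set.Ioo (0:ℝ) 1)
  have hpre : (MeasurableEquiv.toLp 2 (Fin n → ℝ)).symm ⁻¹'
      (Set.pi Set.univ fun _ => Set.Ioo (0:ℝ) 1) = unitCube n := by
    ext x; exact ⟨fun h i => h i (Set.mem_univ i), fun h i _ => h i⟩
  rw [hpre] at h
  rw [h, MeasureTheory.volume_pi_pi]
  simp [Real.volume_Ioo]

lemma volume_badSet (hn : 2 ≤ n) {B : Set ℝ} (hB : B.Countable) :
    volume {x : Vec n | x (fl hn) ∈ B} = 0 := by
  have : {x : Vec n | x (fl hn) ∈ B} = ⋃ c ∈ B, {x : Vec n | x (fl hn) = c} := by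
    ext x; simp
  rw [this]
  exact (measure_biUnion_null_iff hB).2 fun c _ => volume_hyperplane _ c

lemma measurable_coordLast (hn : 2 ≤ n) : Continuous fun x : Vec n => coordLast x := by
  have : (fun x : Vec n => coordLast x) = fun x => x (fl hn) :=
    funext fun x => coordLast_eq hn x
  rw [this]
  exact (EuclideanSpace.proj (𝕜 := ℝ) (fl hn)).continuous

lemma measurableSet_stiff (hn : 2 ≤ n) (lam ε : ℝ) :
    MeasurableSet (stiffLayers lam ε : Set (Vec n)) := by
  have hc : Measurable fun x : Vec n => coordLast x / ε :=
    ((measurable_coordLast hn).measurable).div_const ε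
  have m1 : Measurable fun x : Vec n => ((⌈coordLast x / ε⌉ : ℤ) : ℝ) :=
    (measurable_of_countable _).comp (Int.measurable_ceil.comp hc)
  exact measurableSet_le (m1.sub hc) measurable_const

lemma isOpen_unitCube : IsOpen (unitCube n) := by
  have : unitCube n = ⋂ i : Fin n, (fun x : Vec n => x i) ⁻¹' (Set.Ioo (0:ℝ) 1) := by
    ext x; simp [unitCube]
  rw [this]
  exact isOpen_iInter_of_finite fun i =>
    isOpen_Ioo.preimage (EuclideanSpace.proj (𝕜 := ℝ) i).continuous

/-! ### Compactness of Qbar and the sup bound -/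

lemma isCompact_qbar (hn : 2 ≤ n) : IsCompact (Qbar n) := by
  have hcl : IsClosed (Qbar n) := by
    have : Qbar n = ⋂ i : Fin n,
        (fun x : Vec n => x i) ⁻¹' (Set.Icc (0:ℝ) (if (i : ℕ) + 1 = n then 2 else 1)) := by
      ext x
      simp only [Qbar, Set.mem_iInter, Set.mem_preimage, Set.mem_setOf_eq, coordLast_eq hn]
      constructor
      · rintro ⟨ha, hb⟩ i
        by_cases h : (i : ℕ) + 1 = n
        · rw [if_pos h]
          have : i = fl hn := (last_iff hn i).1 h
          rw [this]; exact hb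
        · rw [if_neg h]; exact ha i h
      · intro hx
        refine ⟨fun i hi => ?_, ?_⟩
        · have := hx i; rwa [if_neg hi] at this
        · have := hx (fl hn)
          rwa [if_pos ((last_iff hn (fl hn)).2 rfl)] at this
    rw [this]
    exact isClosed_iInter fun i =>
      isClosed_Icc.preimage (EuclideanSpace.proj (𝕜 := ℝ) i).continuous
  have hsub : Qbar n ⊆ Metric.closedBall 0 (Real.sqrt (4 * n)) := by
    intro x hx
    rw [Metric.mem_closedBall, dist_zero_right, EuclideanSpace.norm_eq]
    apply Real.sqrt_le_sqrt
    have hb : ∀ i : Fin n, ‖x i‖ ^ 2 ≤ 4 := by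
      intro i
      have h2 : 0 ≤ x i ∧ x i ≤ 2 := by
        by_cases h : (i : ℕ) + 1 = n
        · have : i = fl hn := (last_iff hn i).1 h
          have hb := hx.2; rw [coordLast_eq hn] at hb; rw [this]
          exact ⟨hb.1, hb.2⟩
        · have := hx.1 i h; exact ⟨this.1, by linarith [this.2]⟩
      rw [Real.norm_eq_abs, sq_abs]
      nlinarith [h2.1, h2.2]
    calc ∑ i, ‖x i‖ ^ 2 ≤ ∑ _i : Fin n, (4:ℝ) := Finset.sum_le_sum fun i _ => hb i
      _ = 4 * n := by simp [mul_comm]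
  exact (isCompact_closedBall _ _).of_isClosed_subset hcl hsub

lemma d1_apply' (hn : 0 < n) (f : Vec n → Vec n) (z : Vec n) :
    d1 f z = fderiv ℝ f z (bas ⟨0, hn⟩) := dif_pos hn

lemma contDiff_d1 (hn : 2 ≤ n) {f : Vec n → Vec n} (hf : ContDiff ℝ 2 f) :
    ContDiff ℝ 1 (d1 f) := by
  have : d1 f = fun z => fderiv ℝ f z (bas ⟨0, by omega⟩) :=
    funext fun z => d1_apply' (by omega) f z
  rw [this]
  exact (hf.fderiv_right (by norm_num)).clm_apply contDiff_const

lemma supD11_nonneg (f : Vec n → Vec n) : 0 ≤ supD11 f :=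
  Real.iSup_nonneg fun _ => Real.iSup_nonneg fun _ => norm_nonneg _

lemma norm_d11_le (hn : 2 ≤ n) {f : Vec n → Vec n} (hf : ContDiff ℝ 2 f) {y : Vec n}
    (hy : y ∈ Qbar n) : ‖d1 (d1 f) y‖ ≤ supD11 f := by
  set F := fun z : Vec n => ‖d1 (d1 f) z‖ with hF
  have hcont : Continuous F := by
    have h1 : d1 (d1 f) = fun z => fderiv ℝ (d1 f) z (bas ⟨0, by omega⟩) :=
      funext fun z => d1_apply' (by omega) (d1 f) z
    rw [hF, h1]
    exact ((((contDiff_d1 hn hf).continuous_fderiv one_ne_zero)).clm_apply continuous_const).norm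
  obtain ⟨C, hC⟩ := (isCompact_qbar hn).bddAbove_image hcont.continuousOn
  have hub : ∀ x : Vec n, (⨆ _ : x ∈ Qbar n, F x) ≤ max C 0 := by
    intro x
    by_cases hx : x ∈ Qbar n
    · rw [ciSup_pos hx]
      exact le_max_of_le_left (hC (Set.mem_image_of_mem F hx))
    · haveI : IsEmpty (x ∈ Qbar n) := ⟨hx⟩
      rw [Real.iSup_of_isEmpty]
      exact le_max_right _ _
  have hbdd : BddAbove (Set.range fun x : Vec n => ⨆ _ : x ∈ Qbar n, F x) := by
    refine ⟨max C 0, ?_⟩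
    rintro v ⟨x, rfl⟩
    exact hub x
  have h0 : (⨆ _ : y ∈ Qbar n, F y) = F y := ciSup_pos hy
  calc F y = ⨆ _ : y ∈ Qbar n, F y := h0.symm
    _ ≤ ⨆ x, ⨆ _ : x ∈ Qbar n, F x := le_ciSup hbdd y
    _ = supD11 f := rfl

/-! ### Local structure of the stiff layers -/

lemma stiff_local {lam ε : ℝ} (hlam : lam ∈ Set.Ioo (0:ℝ) 1) (hε : ε ∈ Set.Ioo (0:ℝ) 1)
    {t : ℝ} (hst : (⌈t / ε⌉ : ℝ) - t / ε ≤ 1 - lam)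
    (h1 : ∀ k : ℤ, t ≠ ε * k) (h2 : ∀ k : ℤ, t ≠ ε * ((k : ℝ) - (1 - lam))) :
    ∃ δ > 0, ∀ t' : ℝ, |t' - t| < δ →
      (⌈t' / ε⌉ = ⌈t / ε⌉ ∧ (⌈t' / ε⌉ : ℝ) - t' / ε ≤ 1 - lam) := by
  obtain ⟨εpos, _⟩ := hε
  obtain ⟨lam0, lam1⟩ := hlam
  set k := ⌈t / ε⌉ with hk
  have hup : t / ε < k := by
    rcases lt_or_eq_of_le (Int.le_ceil (t / ε)) with h | h
    · exact h
    · exfalso; apply h1 k; field_simp at h; linarith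
  have hlo : (k : ℝ) - (1 - lam) < t / ε := by
    rcases lt_or_eq_of_le (by linarith : (k : ℝ) - (1 - lam) ≤ t / ε) with h | h
    · exact h
    · exfalso
      apply h2 k
      field_simp at h
      linarith
  refine ⟨ε * min (t / ε - ((k : ℝ) - (1 - lam))) ((k : ℝ) - t / ε),
    mul_pos εpos (lt_min (by linarith) (by linarith)), fun t' ht' => ?_⟩
  have hd : |t' / ε - t / ε| < min (t / ε - ((k : ℝ) - (1 - lam))) ((k : ℝ) - t / ε) := by
    rw [div_sub_div_same, abs_div, abs_of_pos εpos]
    rw [div_lt_iff₀ εpos]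
    calc |t' - t| < ε * min _ _ := ht'
      _ = min _ _ * ε := mul_comm _ _
  have hd1 := (abs_lt.1 (lt_of_lt_of_le hd (min_le_left _ _))).1
  have hd2 := (abs_lt.1 (lt_of_lt_of_le hd (min_le_right _ _))).2
  have hceil : ⌈t' / ε⌉ = k := by
    rw [Int.ceil_eq_iff]
    constructor
    · linarith
    · linarith
  exact ⟨hceil, by rw [hceil]; linarith⟩

/-! ### The perp map as a continuous linear map -/

def perpCLM (hn : 2 ≤ n) : Vec n →L[ℝ] Vec n :=
  LinearMap.toContinuousLinearMap
    { toFun := perp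
      map_add' := by
        intro a b
        ext i
        show perp (a + b) i = (perp a + perp b) i
        simp only [PiLp.add_apply, perp_apply hn]
        split_ifs <;> ring
      map_smul' := by
        intro c a
        ext i
        show perp (c • a) i = (c • perp a) i
        simp only [PiLp.smul_apply, perp_apply hn, smul_eq_mul]
        split_ifs <;> ring }

lemma perpCLM_apply (hn : 2 ≤ n) (a : Vec n) : perpCLM hn a = perp a := rfl

/-! ### The gradient of the layered deformation on the stiff layers -/

set_option maxHeartbeats 2000000 in
lemma grad_layered (hn : 2 ≤ n) {lam ε : ℝ} (hlam : lam ∈ Set.Ioo (0:ℝ) 1)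
    (hε : ε ∈ Set.Ioo (0:ℝ) 1) {f : Vec n → Vec n} (hf : ContDiff ℝ 2 f)
    (hmid : ∀ x ∈ Qbar n, ∀ i : Fin n, 0 < (i : ℕ) → (i : ℕ) + 1 < n →
      fderiv ℝ f x (bas i) = bas i)
    {x : Vec n} (hxs : x ∈ stiffLayers lam ε) (hxc : x ∈ unitCube n)
    (h1 : ∀ k : ℤ, coordLast x ≠ ε * k)
    (h2 : ∀ k : ℤ, coordLast x ≠ ε * ((k : ℝ) - (1 - lam))) :
    projX lam ε x ∈ Qbar n ∧
    |coordLast x - projT lam ε (coordLast x)| ≤ ε ∧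
    ∀ j : Fin n, fderiv ℝ (layered lam ε f) x (bas j) =
      if j = fz hn then
        d1 f (projX lam ε x) +
          (coordLast x - projT lam ε (coordLast x)) • perp (d1 (d1 f) (projX lam ε x))
      else if j = fl hn then perp (d1 f (projX lam ε x)) else bas j := by
  obtain ⟨εpos, εlt⟩ := hε
  obtain ⟨lam0, lam1⟩ := hlam
  have npos : 0 < n := by omega
  set t : ℝ := coordLast x with ht
  set k : ℤ := ⌈t / ε⌉ with hk
  have hst : (k : ℝ) - t / ε ≤ 1 - lam := hxs
  have htIoo : t ∈ Set.Ioo (0:ℝ) 1 := by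
    have := hxc (fl hn)
    rwa [ht, coordLast_eq hn]
  set t₀ : ℝ := projT lam ε t with ht₀
  have ht₀val : t₀ = ε * (k : ℝ) - ε + (1 + lam) / 2 * ε := rfl
  -- basic bounds
  have hk1 : 1 ≤ k := by
    have : 0 < k := Int.ceil_pos.2 (div_pos htIoo.1 εpos)
    omega
  have htk : t ≤ ε * k := by
    have h := Int.le_ceil (t / ε)
    rw [div_le_iff₀ εpos] at h
    linarith [h]
  have htk2 : ε * (k : ℝ) - ε * (1 - lam) ≤ t := by
    have : (k : ℝ) - t / ε ≤ 1 - lam := hst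
    have h2 : ((k : ℝ) - (1 - lam)) * ε ≤ t := by
      rw [← le_div_iff₀ εpos]
      linarith
    linarith [h2]
  have hεk : ε * (k : ℝ) < 2 := by
    have h : (k:ℝ) < t / ε + 1 := by rw [hk]; exact Int.ceil_lt_add_one (t / ε)
    have h3 := mul_lt_mul_of_pos_left h εpos
    have h4 : ε * (t / ε) = t := by field_simp
    have h5 : ε * (t / ε + 1) = t + ε := by rw [mul_add, h4, mul_one]
    rw [h5] at h3
    linarith [htIoo.2]
  have ht₀pos : 0 < t₀ := by
    rw [ht₀val]
    have : (1:ℝ) ≤ (k:ℝ) := by exact_mod_cast hk1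
    nlinarith
  have ht₀lt : t₀ < 2 := by
    rw [ht₀val]; nlinarith
  have hs_le : |t - t₀| ≤ ε := by
    rw [abs_le, ht₀val]
    constructor <;> nlinarith
  -- the projected point
  have hyx : projX lam ε x = setLast x t₀ := rfl
  set y : Vec n := setLast x t₀ with hy
  -- y lies in the interior box O
  have hyQ : y ∈ Qbar n ∧ Qbar n ∈ 𝓝 y := by
    set O : Set (Vec n) :=
      {z : Vec n | ∀ i : Fin n, z i ∈ Set.Ioo (0:ℝ) (if i = fl hn then 2 else 1)} with hO
    have hOopen : IsOpen O := by
      have : O = ⋂ i : Fin n,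
          (fun z : Vec n => z i) ⁻¹' (Set.Ioo (0:ℝ) (if i = fl hn then 2 else 1)) := by
        ext z; simp [hO]
      rw [this]
      exact isOpen_iInter_of_finite fun i =>
        isOpen_Ioo.preimage (EuclideanSpace.proj (𝕜 := ℝ) i).continuous
    have hOQ : O ⊆ Qbar n := by
      intro z hz
      refine ⟨fun i hi => ?_, ?_⟩
      · have hne : i ≠ fl hn := fun hh => hi ((last_iff hn i).mpr hh)
        have := hz i
        rw [if_neg hne] at this
        exact ⟨this.1.le, this.2.le⟩
      · have := hz (fl hn)
        rw [if_pos rfl] at this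
        rw [coordLast_eq hn]
        exact ⟨this.1.le, this.2.le⟩
    have hyO : y ∈ O := by
      intro i
      rw [hy, setLast_apply hn]
      by_cases h : i = fl hn
      · rw [if_pos h, if_pos h]; exact ⟨ht₀pos, ht₀lt⟩
      · rw [if_neg h, if_neg h]; exact hxc i
    exact ⟨hOQ hyO, Filter.mem_of_superset (hOopen.mem_nhds hyO) hOQ⟩
  -- local form of the layered map
  obtain ⟨δ, δpos, hδ⟩ := stiff_local ⟨lam0, lam1⟩ ⟨εpos, εlt⟩ hst h1 h2
  set g : Vec n → Vec n :=
    fun z => f (setLast z t₀) + (coordLast z - t₀) • perp (d1 f (setLast z t₀)) with hg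
  have heq : layered lam ε f =ᶠ[𝓝 x] g := by
    filter_upwards [Metric.ball_mem_nhds x δpos] with z hz
    have hz' : |coordLast z - t| < δ := by
      have hzz : coordLast z - t = (z - x) (fl hn) := by
        rw [ht, coordLast_eq hn, coordLast_eq hn, PiLp.sub_apply]
      rw [hzz]
      exact lt_of_le_of_lt (abs_coord_le_norm _ _)
        (by rwa [Metric.mem_ball, dist_eq_norm] at hz)
    obtain ⟨hceil, hstz⟩ := hδ (coordLast z) hz'
    have hzs : z ∈ stiffLayers lam ε := hstz
    have hproj : projT lam ε (coordLast z) = t₀ := by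
      rw [ht₀val]
      show ε * (⌈coordLast z / ε⌉ : ℝ) - ε + (1 + lam) / 2 * ε = _
      rw [hceil]
    simp only [layered, if_pos hzs, stiffVal, projX, hproj, hg]
  have hfd : fderiv ℝ (layered lam ε f) x = fderiv ℝ g x := heq.fderiv_eq
  -- derivative computation
  set SL : Vec n →L[ℝ] Vec n :=
    ContinuousLinearMap.id ℝ (Vec n) -
      (EuclideanSpace.proj (𝕜 := ℝ) (fl hn)).smulRight (bas (fl hn)) with hSL
  have hSLapp : ∀ (z : Vec n) (j : Fin n),
      SL z j = if j = fl hn then 0 else z j := by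
    intro z j
    have : SL z j = z j - z (fl hn) * (bas (fl hn) j) := by
      simp [hSL, ContinuousLinearMap.smulRight_apply, PiLp.sub_apply, smul_eq_mul]
    rw [this, bas_apply]
    by_cases h : j = fl hn
    · rw [if_pos h, if_pos h, h]; ring
    · rw [if_neg h, if_neg (fun hh => h hh), mul_zero, sub_zero]
  have hset : ∀ z : Vec n, setLast z t₀ = SL z + t₀ • bas (fl hn) := by
    intro z
    ext j
    rw [setLast_apply hn, PiLp.add_apply, hSLapp, PiLp.smul_apply, bas_apply, smul_eq_mul]
    by_cases h : j = fl hn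
    · rw [if_pos h, if_pos h, if_pos h]; ring
    · rw [if_neg h, if_neg h, if_neg h, mul_zero, add_zero]
  have hA : HasFDerivAt (fun z : Vec n => setLast z t₀) SL x := by
    have : (fun z : Vec n => setLast z t₀) = fun z => SL z + t₀ • bas (fl hn) :=
      funext hset
    rw [this]
    exact SL.hasFDerivAt.add_const _
  have hdf : Differentiable ℝ f := hf.differentiable two_ne_zero
  have hd1c : ContDiff ℝ 1 (d1 f) := contDiff_d1 hn hf
  have hd1d : Differentiable ℝ (d1 f) := hd1c.differentiable one_ne_zero
  set F1 : Vec n →L[ℝ] Vec n := fderiv ℝ f y with hF1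
  set Hy : Vec n →L[ℝ] Vec n := fderiv ℝ (d1 f) y with hHy
  have hg1 : HasFDerivAt (fun z : Vec n => f (setLast z t₀)) (F1.comp SL) x :=
    ((hdf y).hasFDerivAt).comp x hA
  have hwd : HasFDerivAt (fun z : Vec n => perp (d1 f (setLast z t₀)))
      ((perpCLM hn).comp (Hy.comp SL)) x := by
    have h1 : HasFDerivAt (fun z : Vec n => d1 f (setLast z t₀)) (Hy.comp SL) x := by
      have h := ((hd1d y).hasFDerivAt).comp x hA; exact h
    exact ((perpCLM hn).hasFDerivAt).comp x h1
  have hσ : HasFDerivAt (fun z : Vec n => coordLast z - t₀)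
      (EuclideanSpace.proj (𝕜 := ℝ) (fl hn)) x := by
    have : (fun z : Vec n => coordLast z - t₀)
        = fun z : Vec n => (EuclideanSpace.proj (𝕜 := ℝ) (fl hn)) z - t₀ := by
      funext z; rw [coordLast_eq hn]; rfl
    rw [this]
    exact (EuclideanSpace.proj (𝕜 := ℝ) (fl hn)).hasFDerivAt.sub_const _
  have hg2 : HasFDerivAt
      (fun z : Vec n => (coordLast z - t₀) • perp (d1 f (setLast z t₀)))
      ((coordLast x - t₀) • ((perpCLM hn).comp (Hy.comp SL)) +
        (EuclideanSpace.proj (𝕜 := ℝ) (fl hn)).smulRight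
          (perp (d1 f (setLast x t₀)))) x := hσ.smul hwd
  have hG : HasFDerivAt g
      (F1.comp SL + ((coordLast x - t₀) • ((perpCLM hn).comp (Hy.comp SL)) +
        (EuclideanSpace.proj (𝕜 := ℝ) (fl hn)).smulRight
          (perp (d1 f (setLast x t₀))))) x := hg1.add hg2
  -- evaluate the columns
  have hSLb : ∀ j : Fin n, SL (bas j) = if j = fl hn then 0 else bas j := by
    intro j
    by_cases h : j = fl hn
    · rw [if_pos h]
      ext i
      rw [hSLapp]
      by_cases hi : i = fl hn
      · rw [if_pos hi]; rfl
      · rw [if_neg hi, bas_apply, if_neg (fun hh : i = j => hi (h ▸ hh))]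
        rfl
    · rw [if_neg h]
      ext i
      rw [hSLapp]
      by_cases hi : i = fl hn
      · rw [if_pos hi, bas_apply, if_neg (fun hh : i = j => h (hh ▸ hi))]
      · rw [if_neg hi]
  have hπb : ∀ j : Fin n, (EuclideanSpace.proj (𝕜 := ℝ) (fl hn)) (bas j)
      = if j = fl hn then (1:ℝ) else 0 := by
    intro j
    have hh : (EuclideanSpace.proj (𝕜 := ℝ) (fl hn)) (bas j) = bas j (fl hn) := rfl
    rw [hh, bas_apply]
    by_cases h : j = fl hn
    · rw [if_pos h.symm, if_pos h]
    · rw [if_neg (fun hh2 => h hh2.symm), if_neg h]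
  refine ⟨by rw [hyx]; exact hyQ.1, hs_le, fun j => ?_⟩
  rw [hyx]
  rw [hfd, hG.fderiv]
  simp only [ContinuousLinearMap.add_apply, ContinuousLinearMap.comp_apply,
    ContinuousLinearMap.smul_apply, ContinuousLinearMap.smulRight_apply]
  rw [hSLb j, hπb j]
  by_cases hj0 : j = fz hn
  · rw [if_pos hj0, hj0, if_neg (fz_ne_fl hn), if_neg (fz_ne_fl hn)]
    have e1 : F1 (bas (fz hn)) = d1 f y := (d1_apply' npos f y).symm
    have e2 : Hy (bas (fz hn)) = d1 (d1 f) y := (d1_apply' npos (d1 f) y).symm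
    rw [e1, e2, perpCLM_apply, zero_smul, add_zero]
  · by_cases hjl : j = fl hn
    · rw [if_neg hj0, if_pos hjl, if_pos hjl, if_pos hjl]
      rw [F1.map_zero, Hy.map_zero, (perpCLM hn).map_zero, smul_zero, zero_add, one_smul,
        zero_add]
    · rw [if_neg hj0, if_neg hjl, if_neg hjl, if_neg hjl]
      have hj1 : 0 < (j : ℕ) := by
        rcases Nat.eq_zero_or_pos (j : ℕ) with h | h
        · exact absurd ((zero_iff hn j).1 h) hj0
        · exact h
      have hj2 : (j : ℕ) + 1 < n := by
        have h2 := j.2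
        have h3 : (j : ℕ) + 1 ≠ n := fun hh => hjl ((last_iff hn j).1 hh)
        omega
      have e1 : F1 (bas j) = bas j := hmid y hyQ.1 j hj1 hj2
      have hf2d : DifferentiableAt ℝ (fderiv ℝ f) y :=
        ((hf.fderiv_right (m := 1) (by norm_num)).differentiable one_ne_zero) y
      have hcomp : ∀ u : Vec n, HasFDerivAt (fun z => fderiv ℝ f z u)
          ((ContinuousLinearMap.apply ℝ (Vec n) u).comp (fderiv ℝ (fderiv ℝ f) y)) y :=
        fun u => (ContinuousLinearMap.apply ℝ (Vec n) u).hasFDerivAt.comp y hf2d.hasFDerivAt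
      have hHyeq : Hy = (ContinuousLinearMap.apply ℝ (Vec n) (bas (fz hn))).comp
          (fderiv ℝ (fderiv ℝ f) y) := by
        rw [hHy]
        have hd1f : d1 f = fun z => fderiv ℝ f z (bas (fz hn)) :=
          funext fun z => d1_apply' npos f z
        rw [hd1f]
        exact (hcomp (bas (fz hn))).fderiv
      have hsymm : IsSymmSndFDerivAt ℝ f y := hf.contDiffAt.isSymmSndFDerivAt (by norm_num)
      have hconstd : fderiv ℝ (fun z => fderiv ℝ f z (bas j)) y = 0 := by
        have hev : (fun z => fderiv ℝ f z (bas j)) =ᶠ[𝓝 y] fun _ => bas j := by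
          filter_upwards [hyQ.2] with z hz
          exact hmid z hz j hj1 hj2
        rw [hev.fderiv_eq]
        exact fderiv_const_apply _
      have e2 : Hy (bas j) = 0 := by
        have hthis := (hcomp (bas j)).fderiv
        rw [hconstd] at hthis
        have h0 : (ContinuousLinearMap.apply ℝ (Vec n) (bas j)).comp
            (fderiv ℝ (fderiv ℝ f) y) = 0 := hthis.symm
        have h1 : fderiv ℝ (fderiv ℝ f) y (bas (fz hn)) (bas j) = 0 := by
          have h2 := congrArg (fun L : Vec n →L[ℝ] Vec n => L (bas (fz hn))) h0
          simpa only [ContinuousLinearMap.comp_apply, ContinuousLinearMap.apply_apply,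
            ContinuousLinearMap.zero_apply] using h2
        rw [hHyeq, ContinuousLinearMap.comp_apply, ContinuousLinearMap.apply_apply,
          hsymm (bas j) (bas (fz hn))]
        exact h1
      rw [e1, e2, (perpCLM hn).map_zero, smul_zero, zero_smul, add_zero, add_zero]

lemma distSO_nonneg (F : Mat n) : 0 ≤ distSO F := by
  apply Real.sInf_nonneg
  rintro v ⟨Q, _, rfl⟩
  exact Real.sqrt_nonneg _

set_option maxHeartbeats 1000000 in
lemma distSO_bound (hn : 2 ≤ n) {lam ε : ℝ} (hlam : lam ∈ Set.Ioo (0:ℝ) 1)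
    (hε : ε ∈ Set.Ioo (0:ℝ) 1) {f : Vec n → Vec n} (hf : ContDiff ℝ 2 f)
    (harc : ∀ x ∈ Qbar n, ‖d1 f x‖ = 1)
    (hspan : ∀ x ∈ Qbar n, ∀ i : Fin n, (i : ℕ) ≠ 0 → (i : ℕ) + 1 ≠ n → d1 f x i = 0)
    (hmid : ∀ x ∈ Qbar n, ∀ i : Fin n, 0 < (i : ℕ) → (i : ℕ) + 1 < n →
      fderiv ℝ f x (bas i) = bas i)
    {x : Vec n} (hxs : x ∈ stiffLayers lam ε) (hxc : x ∈ unitCube n)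
    (h1 : ∀ k : ℤ, coordLast x ≠ ε * k)
    (h2 : ∀ k : ℤ, coordLast x ≠ ε * ((k : ℝ) - (1 - lam))) :
    distSO (gradMat (layered lam ε f) x) ≤ ε * supD11 f := by
  obtain ⟨hyQ, hsle, hcol⟩ := grad_layered hn hlam hε hf hmid hxs hxc h1 h2
  set y := projX lam ε x with hy
  set s := coordLast x - projT lam ε (coordLast x) with hs
  set v := d1 f y with hv
  set wv := d1 (d1 f) y with hwv
  set a := v (fz hn) with ha
  set b := v (fl hn) with hb
  have hvmid : ∀ i : Fin n, i ≠ fz hn → i ≠ fl hn → v i = 0 := by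
    intro i h0 hl
    exact hspan y hyQ i (fun hh => h0 ((zero_iff hn i).1 hh))
      (fun hh => hl ((last_iff hn i).1 hh))
  have hab : a ^ 2 + b ^ 2 = 1 := by
    have hn1 : ‖v‖ = 1 := harc y hyQ
    have hsum1 : ∑ i, (v i) ^ 2 = 1 := by rw [← norm_sq_eq_sum, hn1]; norm_num
    have h3 : ∑ i, (v i) ^ 2 = a ^ 2 + b ^ 2 := by
      have hmem : fl hn ∈ Finset.univ.erase (fz hn) :=
        Finset.mem_erase.2 ⟨(fz_ne_fl hn).symm, Finset.mem_univ _⟩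
      rw [← Finset.add_sum_erase _ _ (Finset.mem_univ (fz hn)),
        ← Finset.add_sum_erase _ _ hmem]
      have hzero : ∑ i ∈ ((Finset.univ.erase (fz hn)).erase (fl hn)), (v i) ^ 2 = 0 := by
        apply Finset.sum_eq_zero
        intro i hi
        obtain ⟨hil, hiz⟩ := Finset.mem_erase.1 hi
        obtain ⟨hiz', _⟩ := Finset.mem_erase.1 hiz
        rw [hvmid i hiz' hil]; ring
      rw [hzero]; ring
    rw [← hsum1, h3]
  set R := Rot hn a b with hR
  have hRSO : R ∈ SO n := rot_mem_SO hn a b hab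
  set G := gradMat (layered lam ε f) x with hG
  have hGcol : ∀ i j : Fin n, G i j = (fderiv ℝ (layered lam ε f) x) (bas j) i :=
    fun i j => rfl
  have hdiff : ∀ i j : Fin n, G i j - R i j = if j = fz hn then s * (perp wv i) else 0 := by
    intro i j
    rw [hGcol i j, hcol j]
    by_cases hj0 : j = fz hn
    · rw [if_pos hj0, if_pos hj0]
      have hRiv : R i (fz hn) = v i := by
        have hRe : R i (fz hn) = if i = fz hn then a else if i = fl hn then b else 0 := by
          rw [hR, Rot]; simp only [Matrix.of_apply, if_pos rfl, if_true]
        rw [hRe]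
        by_cases hi0 : i = fz hn
        · rw [if_pos hi0, hi0, ha]
        · rw [if_neg hi0]
          by_cases hil : i = fl hn
          · rw [if_pos hil, hil, hb]
          · rw [if_neg hil, (hvmid i hi0 hil)]
      rw [hj0, PiLp.add_apply, PiLp.smul_apply, smul_eq_mul, hRiv]; ring
    · rw [if_neg hj0, if_neg hj0]
      by_cases hjl : j = fl hn
      · rw [if_pos hjl, hjl]
        have hRi : R i (fl hn) = perp v i := by
          have h4 : R i (fl hn) = if i = fz hn then -b else if i = fl hn then a else 0 := by
            rw [hR, Rot]
            simp only [Matrix.of_apply, if_neg (Ne.symm (fz_ne_fl hn)), if_pos rfl, if_true]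
          rw [h4, perp_apply hn]
          by_cases hi0 : i = fz hn
          · rw [if_pos hi0, if_pos hi0, hb]
          · rw [if_neg hi0, if_neg hi0]
            by_cases hil : i = fl hn
            · rw [if_pos hil, if_pos hil, ha]
            · rw [if_neg hil, if_neg hil, hvmid i hi0 hil]
        rw [hRi, sub_self]
      · rw [if_neg hjl]
        have hRi : R i j = if i = j then 1 else 0 := by
          rw [hR, Rot]; simp only [Matrix.of_apply, if_neg hj0, if_neg hjl]
        rw [hRi, bas_apply]
        split_ifs <;> norm_num
  have hfrob : frob (G - R) = |s| * ‖wv‖ := by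
    rw [frob]
    have hentry : ∀ i j : Fin n,
        ((G - R) i j) ^ 2 = if j = fz hn then (s * perp wv i) ^ 2 else 0 := by
      intro i j
      rw [Matrix.sub_apply, hdiff i j]
      split_ifs <;> simp
    have hsum : ∑ i, ∑ j, ((G - R) i j) ^ 2 = ∑ i, (s * perp wv i) ^ 2 := by
      apply Finset.sum_congr rfl
      intro i _
      rw [Finset.sum_congr rfl fun j _ => hentry i j,
        Finset.sum_ite_eq' Finset.univ (fz hn) (fun _ => (s * perp wv i) ^ 2),
        if_pos (Finset.mem_univ _)]
    have hsum2 : ∑ i, (s * perp wv i) ^ 2 = s ^ 2 * ∑ i, (perp wv i) ^ 2 := by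
      rw [Finset.mul_sum]
      exact Finset.sum_congr rfl fun i _ => by ring
    rw [hsum, hsum2, sum_sq_perp hn, ← norm_sq_eq_sum,
      Real.sqrt_mul (sq_nonneg s), Real.sqrt_sq_eq_abs, Real.sqrt_sq (norm_nonneg _)]
  have hle1 : distSO G ≤ frob (G - R) := by
    apply csInf_le
    · exact ⟨0, by rintro u ⟨Q, _, rfl⟩; exact Real.sqrt_nonneg _⟩
    · exact ⟨R, hRSO, rfl⟩
  calc distSO G ≤ frob (G - R) := hle1
    _ = |s| * ‖wv‖ := hfrob
    _ ≤ ε * supD11 f :=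
        mul_le_mul hsle (norm_d11_le hn hf hyQ) (norm_nonneg _) hε.1.le

end AuxProof


/-- Lemma 2.1, energy estimate: for the layered construction `u_ε` built
from `f_ε ∈ C²(Q̄;ℝⁿ)` with `|∂_1 f_ε| = 1`, `∂_1 f_ε ∈ span{e_1,e_n}` and `∂_i f_ε = e_i`
for `i = 2,…,n-1`, the stiff-layer elastic energy satisfies
`∫_{εY_stiff ∩ Ω} dist^p(∇u_ε, SO(n)) dx ≤ 2^p ε^p ‖∂²₁₁ f_ε‖^p_{L^∞(Q̄)}`. -/
theorem statement5 {n : ℕ} (hn : 2 ≤ n) (lam : ℝ) (hlam : lam ∈ Set.Ioo (0 : ℝ) 1)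
    (p : ℝ) (hp : 1 < p) (ε : ℝ) (hε : ε ∈ Set.Ioo (0 : ℝ) 1)
    (f : Vec n → Vec n) (hf : ContDiff ℝ 2 f)
    (harc : ∀ x ∈ Qbar n, ‖d1 f x‖ = 1)
    (hspan : ∀ x ∈ Qbar n, ∀ i : Fin n, (i : ℕ) ≠ 0 → (i : ℕ) + 1 ≠ n → d1 f x i = 0)
    (hmid : ∀ x ∈ Qbar n, ∀ i : Fin n, 0 < (i : ℕ) → (i : ℕ) + 1 < n →
      fderiv ℝ f x (bas i) = bas i) :
    ∫⁻ x in stiffLayers lam ε ∩ unitCube n,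
        ENNReal.ofReal (distSO (gradMat (layered lam ε f) x) ^ p) ≤
      ENNReal.ofReal (2 ^ p * ε ^ p * supD11 f ^ p) := by
  obtain ⟨εpos, εlt⟩ := hε
  have hS : MeasurableSet (stiffLayers lam ε ∩ unitCube n : Set (Vec n)) :=
    (measurableSet_stiff hn lam ε).inter isOpen_unitCube.measurableSet
  set N : Set (Vec n) := {x : Vec n | x (fl hn) ∈
      ((Set.range fun k : ℤ => ε * (k : ℝ)) ∪
        (Set.range fun k : ℤ => ε * ((k : ℝ) - (1 - lam))))} with hNdef
  have hNnull : volume N = 0 :=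
    volume_badSet hn ((Set.countable_range _).union (Set.countable_range _))
  set C : ℝ≥0∞ := ENNReal.ofReal ((ε * supD11 f) ^ p) with hCdef
  have hae : ∀ᵐ x ∂(volume.restrict (stiffLayers lam ε ∩ unitCube n)),
      ENNReal.ofReal (distSO (gradMat (layered lam ε f) x) ^ p) ≤ C := by
    rw [ae_iff, Measure.restrict_apply' hS]
    refine measure_mono_null ?_ hNnull
    rintro x ⟨hxbad, hxs, hxc⟩
    by_contra hxN
    apply hxbad
    have h1 : ∀ k : ℤ, coordLast x ≠ ε * k := by
      intro k hk
      exact hxN (Set.mem_union_left _ ⟨k, by show ε * (k:ℝ) = x (fl hn); rw [← hk, coordLast_eq hn]⟩)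
    have h2 : ∀ k : ℤ, coordLast x ≠ ε * ((k : ℝ) - (1 - lam)) := by
      intro k hk
      exact hxN (Set.mem_union_right _ ⟨k, by show ε * ((k:ℝ) - (1 - lam)) = x (fl hn); rw [← hk, coordLast_eq hn]⟩)
    have hdist := distSO_bound hn hlam ⟨εpos, εlt⟩ hf harc hspan hmid hxs hxc h1 h2
    exact ENNReal.ofReal_le_ofReal
      (Real.rpow_le_rpow (distSO_nonneg _) hdist (by linarith))
  calc ∫⁻ x in stiffLayers lam ε ∩ unitCube n,
      ENNReal.ofReal (distSO (gradMat (layered lam ε f) x) ^ p)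
      ≤ ∫⁻ _x in stiffLayers lam ε ∩ unitCube n, C := lintegral_mono_ae hae
    _ = C * volume (stiffLayers lam ε ∩ unitCube n) := setLIntegral_const _ _
    _ ≤ C * 1 := by
        refine mul_le_mul_right ?_ _
        calc volume (stiffLayers lam ε ∩ unitCube n) ≤ volume (unitCube n) :=
              measure_mono Set.inter_subset_right
          _ = 1 := volume_unitCube
    _ = C := mul_one C
    _ ≤ ENNReal.ofReal (2 ^ p * ε ^ p * supD11 f ^ p) := by
        apply ENNReal.ofReal_le_ofReal
        have hM := supD11_nonneg f
        rw [Real.mul_rpow εpos.le hM]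
        have h3 : (1 : ℝ) ≤ 2 ^ p := by
          rw [show (1 : ℝ) = (2 : ℝ) ^ (0 : ℝ) from (Real.rpow_zero 2).symm]
          exact Real.rpow_le_rpow_of_exponent_le one_le_two (by linarith)
        have hX : 0 ≤ ε ^ p * supD11 f ^ p :=
          mul_nonneg (Real.rpow_nonneg εpos.le p) (Real.rpow_nonneg hM p)
        nlinarith [hX, h3]


end LayeredRigidity
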